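/- arXiv:2405.10754 — 7 statements merged into one kernel-verified Lean document; each statement's English description precedes it below -/
import Mathlib

section
/- For every real number L with L ≥ (1/m) Σ_{r=1}^m ‖a_r‖²(3‖a_r‖² + ‖ε‖_∞), and for all x, z ∈ ℝⁿ, one has D_f(x,z) ≤ L · D_ψ(x,z); that is, f is L-relatively smooth with respect to the entropy ψ. -/
open scoped RealInnerProductSpace BigOperators

noncomputable def phaseObj (m n : ℕ) (a : Fin m → EuclideanSpace ℝ (Fin n))
    (xbar : EuclideanSpace ℝ (Fin n)) (ε : Fin m → ℝ)
    (x : EuclideanSpace ℝ (Fin n)) : ℝ :=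
  (1 / (4 * (m : ℝ))) * ∑ r, (⟪a r, x⟫ ^ 2 - ⟪a r, xbar⟫ ^ 2) ^ 2
    - (1 / (2 * (m : ℝ))) * ∑ r, ε r * (⟪a r, x⟫ ^ 2 - ⟪a r, xbar⟫ ^ 2)
    + (∑ r, ε r ^ 2) / (4 * (m : ℝ))

noncomputable def phaseGrad (m n : ℕ) (a : Fin m → EuclideanSpace ℝ (Fin n))
    (xbar : EuclideanSpace ℝ (Fin n)) (ε : Fin m → ℝ)
    (x : EuclideanSpace ℝ (Fin n)) : EuclideanSpace ℝ (Fin n) :=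
  (1 / (m : ℝ)) • ∑ r, ((⟪a r, x⟫ ^ 2 - ⟪a r, xbar⟫ ^ 2 - ε r) * ⟪a r, x⟫) • a r

noncomputable def entropy (n : ℕ) (x : EuclideanSpace ℝ (Fin n)) : ℝ :=
  (1 / 4) * ‖x‖ ^ 4 + (1 / 2) * ‖x‖ ^ 2

noncomputable def entropyGrad (n : ℕ) (x : EuclideanSpace ℝ (Fin n)) :
    EuclideanSpace ℝ (Fin n) :=
  (‖x‖ ^ 2 + 1) • x


lemma scalar_key (α A B p t u b e E : ℝ)
    (hα : 0 ≤ α) (hB : 0 ≤ B) (hb : 0 ≤ b) (hE : |e| ≤ E)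
    (hw : 0 ≤ A + B - 2*p) (hv : 0 ≤ A + B + 2*p)
    (hp : p^2 ≤ A*B)
    (ht : t^2 ≤ α*B)
    (hu : u^2 ≤ α*(A+B-2*p))
    (hst : (2*t+u)^2 ≤ α*(A+B+2*p)) :
    (3/2)*t^2*u^2 + t*u^3 + (1/4)*u^4 - (1/2)*(b+e)*u^2
      ≤ α*(3*α+E) * ((1/4)*(A-B)^2 + (1/2)*(B+1)*(A+B-2*p)) := by
  have hE0 : 0 ≤ E := le_trans (abs_nonneg e) hE
  have heE : 0 ≤ e + E := by
    have := neg_abs_le e; linarith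
  have h1 : (3/2)*t^2*u^2 + t*u^3 + (1/4)*u^4 - (1/2)*(b+e)*u^2
      ≤ (1/4)*((2*t+u)^2*u^2) + (1/2)*(t^2*u^2) + (1/2)*(E*u^2) := by
    nlinarith [mul_nonneg hb (sq_nonneg u), mul_nonneg heE (sq_nonneg u)]
  have h2 : (2*t+u)^2*u^2 ≤ (α*(A+B+2*p))*(α*(A+B-2*p)) :=
    mul_le_mul hst hu (sq_nonneg u) (by positivity)
  have h3 : t^2*u^2 ≤ (α*B)*(α*(A+B-2*p)) :=
    mul_le_mul ht hu (sq_nonneg u) (by positivity)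
  have h4 : E*u^2 ≤ E*(α*(A+B-2*p)) := mul_le_mul_of_nonneg_left hu hE0
  nlinarith [mul_nonneg (mul_nonneg hα hα) (sq_nonneg (B - p)),
    mul_nonneg (mul_nonneg hα hα) hw,
    mul_nonneg (mul_nonneg hα hα) (sq_nonneg (A-B)),
    mul_nonneg (mul_nonneg hα hE0) (sq_nonneg (A-B)),
    mul_nonneg (mul_nonneg (mul_nonneg hα hE0) hB) hw]

/-- Bregman divergence of the noisy phase-retrieval objective `f`. -/
noncomputable def Df (m n : ℕ) (a : Fin m → EuclideanSpace ℝ (Fin n))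
    (xbar : EuclideanSpace ℝ (Fin n)) (ε : Fin m → ℝ)
    (x z : EuclideanSpace ℝ (Fin n)) : ℝ :=
  phaseObj m n a xbar ε x - phaseObj m n a xbar ε z - ⟪phaseGrad m n a xbar ε z, x - z⟫

/-- Bregman divergence of the entropy `ψ`. -/
noncomputable def Dψ (n : ℕ) (x z : EuclideanSpace ℝ (Fin n)) : ℝ :=
  entropy n x - entropy n z - ⟪entropyGrad n z, x - z⟫


lemma Dψ_eq (n : ℕ) (x z : EuclideanSpace ℝ (Fin n)) :
    Dψ n x z = (1/4)*(‖x‖^2 - ‖z‖^2)^2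
      + (1/2)*(‖z‖^2 + 1)*(‖x‖^2 + ‖z‖^2 - 2*⟪z,x⟫) := by
  simp only [Dψ, entropy, entropyGrad, real_inner_smul_left, inner_sub_right,
    real_inner_self_eq_norm_sq]
  ring

lemma Df_eq (m n : ℕ) (hm : (m:ℝ) ≠ 0) (a : Fin m → EuclideanSpace ℝ (Fin n))
    (xbar : EuclideanSpace ℝ (Fin n)) (ε : Fin m → ℝ)
    (x z : EuclideanSpace ℝ (Fin n)) :
    Df m n a xbar ε x z = (1/(m:ℝ)) * ∑ r,
      ((3/2)*⟪a r, z⟫^2*(⟪a r, x⟫ - ⟪a r, z⟫)^2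
        + ⟪a r, z⟫*(⟪a r, x⟫ - ⟪a r, z⟫)^3
        + (1/4)*(⟪a r, x⟫ - ⟪a r, z⟫)^4
        - (1/2)*(⟪a r, xbar⟫^2 + ε r)*(⟪a r, x⟫ - ⟪a r, z⟫)^2) := by
  have hsum : ∑ r, ((3/2)*⟪a r, z⟫^2*(⟪a r, x⟫ - ⟪a r, z⟫)^2
        + ⟪a r, z⟫*(⟪a r, x⟫ - ⟪a r, z⟫)^3
        + (1/4)*(⟪a r, x⟫ - ⟪a r, z⟫)^4
        - (1/2)*(⟪a r, xbar⟫^2 + ε r)*(⟪a r, x⟫ - ⟪a r, z⟫)^2)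
      = (1/4) * ∑ r, (⟪a r, x⟫ ^ 2 - ⟪a r, xbar⟫ ^ 2) ^ 2
        - (1/4) * ∑ r, (⟪a r, z⟫ ^ 2 - ⟪a r, xbar⟫ ^ 2) ^ 2
        - (1/2) * ∑ r, ε r * (⟪a r, x⟫ ^ 2 - ⟪a r, xbar⟫ ^ 2)
        + (1/2) * ∑ r, ε r * (⟪a r, z⟫ ^ 2 - ⟪a r, xbar⟫ ^ 2)
        - (∑ r, (⟪a r, z⟫ ^ 2 - ⟪a r, xbar⟫ ^ 2 - ε r) * ⟪a r, z⟫ * ⟪a r, x⟫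
           - ∑ r, (⟪a r, z⟫ ^ 2 - ⟪a r, xbar⟫ ^ 2 - ε r) * ⟪a r, z⟫ * ⟪a r, z⟫) := by
    simp only [Finset.mul_sum, ← Finset.sum_sub_distrib, ← Finset.sum_add_distrib]
    exact Finset.sum_congr rfl fun r _ => by ring
  simp only [Df, phaseObj, phaseGrad, real_inner_smul_left, sum_inner, inner_sub_right]
  rw [hsum]
  field_simp
  ring


lemma cs_sq {n : ℕ} (u v : EuclideanSpace ℝ (Fin n)) : ⟪u, v⟫^2 ≤ ‖u‖^2 * ‖v‖^2 := by
  have h := real_inner_mul_inner_self_le u v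
  rw [real_inner_self_eq_norm_sq, real_inner_self_eq_norm_sq] at h
  nlinarith [h]

/-- `f` is `L`-relatively smooth w.r.t. the entropy `ψ` whenever
`L ≥ (1/m) Σ_r ‖a_r‖²(3‖a_r‖² + ‖ε‖_∞)`. -/
theorem stmt0 (n m : ℕ) (hm : 1 ≤ m) (a : Fin m → EuclideanSpace ℝ (Fin n))
    (xbar : EuclideanSpace ℝ (Fin n)) (ε : Fin m → ℝ) (L : ℝ)
    (hL : L ≥ (1 / (m : ℝ)) * ∑ r, ‖a r‖ ^ 2 * (3 * ‖a r‖ ^ 2 + ⨆ s, |ε s|)) :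
    ∀ x z : EuclideanSpace ℝ (Fin n), Df m n a xbar ε x z ≤ L * Dψ n x z := by
  have hm0 : (0:ℝ) < (m:ℝ) := by exact_mod_cast Nat.lt_of_lt_of_le Nat.zero_lt_one hm
  have hmne : (m:ℝ) ≠ 0 := ne_of_gt hm0
  set E : ℝ := ⨆ s, |ε s| with hEdef
  have hEb : ∀ r, |ε r| ≤ E := fun r =>
    le_ciSup (f := fun s => |ε s|) (Set.Finite.bddAbove (Set.finite_range _)) r
  intro x z
  have hDψ := Dψ_eq n x z
  have hcomm : ⟪x, z⟫ = ⟪z, x⟫ := real_inner_comm z x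
  have hsub : ‖x - z‖^2 = ‖x‖^2 + ‖z‖^2 - 2*⟪z,x⟫ := by
    have h := norm_sub_sq_real x z; linarith
  have hadd : ‖x + z‖^2 = ‖x‖^2 + ‖z‖^2 + 2*⟪z,x⟫ := by
    have h := norm_add_sq_real x z; linarith
  have hw0 : (0:ℝ) ≤ ‖x‖^2 + ‖z‖^2 - 2*⟪z,x⟫ := by
    rw [← hsub]; positivity
  have hv0 : (0:ℝ) ≤ ‖x‖^2 + ‖z‖^2 + 2*⟪z,x⟫ := by
    rw [← hadd]; positivity
  have hDψ0 : 0 ≤ Dψ n x z := by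
    rw [hDψ]
    have h1 : (0:ℝ) ≤ ‖z‖^2 + 1 := by positivity
    nlinarith [sq_nonneg (‖x‖^2 - ‖z‖^2), mul_nonneg h1 hw0]
  have hterm : ∀ r : Fin m,
      (3/2)*⟪a r, z⟫^2*(⟪a r, x⟫ - ⟪a r, z⟫)^2
        + ⟪a r, z⟫*(⟪a r, x⟫ - ⟪a r, z⟫)^3
        + (1/4)*(⟪a r, x⟫ - ⟪a r, z⟫)^4
        - (1/2)*(⟪a r, xbar⟫^2 + ε r)*(⟪a r, x⟫ - ⟪a r, z⟫)^2
      ≤ (‖a r‖^2 * (3*‖a r‖^2 + E)) * Dψ n x z := by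
    intro r
    rw [hDψ]
    apply scalar_key (‖a r‖^2) (‖x‖^2) (‖z‖^2) (⟪z,x⟫) (⟪a r, z⟫)
      (⟪a r, x⟫ - ⟪a r, z⟫) (⟪a r, xbar⟫^2) (ε r) E
      (by positivity) (by positivity) (sq_nonneg _) (hEb r) hw0 hv0
    · have := cs_sq z x; linarith [this]
    · exact cs_sq (a r) z
    · have h1 : ⟪a r, x⟫ - ⟪a r, z⟫ = ⟪a r, x - z⟫ := (inner_sub_right _ _ _).symm
      rw [h1, ← hsub]
      exact cs_sq (a r) (x - z)
    · have h1 : 2*⟪a r, z⟫ + (⟪a r, x⟫ - ⟪a r, z⟫) = ⟪a r, x + z⟫ := by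
        rw [inner_add_right]; ring
      rw [h1, ← hadd]
      exact cs_sq (a r) (x + z)
  calc Df m n a xbar ε x z
      = (1/(m:ℝ)) * ∑ r, ((3/2)*⟪a r, z⟫^2*(⟪a r, x⟫ - ⟪a r, z⟫)^2
        + ⟪a r, z⟫*(⟪a r, x⟫ - ⟪a r, z⟫)^3
        + (1/4)*(⟪a r, x⟫ - ⟪a r, z⟫)^4
        - (1/2)*(⟪a r, xbar⟫^2 + ε r)*(⟪a r, x⟫ - ⟪a r, z⟫)^2) := Df_eq m n hmne a xbar ε x z
    _ ≤ (1/(m:ℝ)) * ∑ r, (‖a r‖^2 * (3*‖a r‖^2 + E)) * Dψ n x z := by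
        apply mul_le_mul_of_nonneg_left _ (by positivity)
        exact Finset.sum_le_sum fun r _ => hterm r
    _ = ((1/(m:ℝ)) * ∑ r, ‖a r‖^2 * (3*‖a r‖^2 + E)) * Dψ n x z := by
        rw [← Finset.sum_mul, mul_assoc]
    _ ≤ L * Dψ n x z := mul_le_mul_of_nonneg_right hL hDψ0
end

section
/- Let L > 0 satisfy D_f(a,b) ≤ L · D_ψ(a,b) for all a, b ∈ ℝⁿ, let κ ∈ [0,1) and let γ > 0 with γ·L ≤ 1 − κ. If x, x⁺ ∈ ℝⁿ satisfy the mirror-descent update (‖x⁺‖² + 1)x⁺ = (‖x‖² + 1)x − γ·∇f(x), then for every u ∈ ℝⁿ: D_ψ(u,x⁺) + γ·f(x⁺) ≤ D_ψ(u,x) − κ·D_ψ(x⁺,x) − γ·D_f(u,x) + γ·f(u). -/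
open scoped RealInnerProductSpace BigOperators

lemma Dψ_nonneg (n : ℕ) (x z : EuclideanSpace ℝ (Fin n)) : 0 ≤ Dψ n x z := by
  have hcs : ⟪z, x⟫ ≤ ‖z‖ * ‖x‖ := real_inner_le_norm z x
  have hx : (0:ℝ) ≤ ‖x‖ := norm_nonneg x
  have hz : (0:ℝ) ≤ ‖z‖ := norm_nonneg z
  have hzz : ⟪z, z⟫ = ‖z‖ ^ 2 := real_inner_self_eq_norm_sq z
  simp only [Dψ, entropy, entropyGrad, real_inner_smul_left, inner_sub_right, hzz]
  nlinarith [sq_nonneg (‖x‖ - ‖z‖), sq_nonneg (‖x‖ + ‖z‖), sq_nonneg (‖x‖^2 - ‖z‖^2),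
    sq_nonneg (‖x‖ * ‖z‖ - ‖z‖^2), mul_nonneg hx hz, sq_nonneg ‖z‖, sq_nonneg ‖x‖]

/-- one-step mirror-descent inequality. -/
theorem stmt1 (n m : ℕ) (hm : 1 ≤ m) (a : Fin m → EuclideanSpace ℝ (Fin n))
    (xbar : EuclideanSpace ℝ (Fin n)) (ε : Fin m → ℝ)
    (L : ℝ) (hLpos : 0 < L)
    (hL : ∀ p q : EuclideanSpace ℝ (Fin n), Df m n a xbar ε p q ≤ L * Dψ n p q)
    (κ : ℝ) (hκ0 : 0 ≤ κ) (hκ1 : κ < 1)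
    (γ : ℝ) (hγ : 0 < γ) (hγL : γ * L ≤ 1 - κ)
    (x xp : EuclideanSpace ℝ (Fin n))
    (hupdate : (‖xp‖ ^ 2 + 1) • xp = (‖x‖ ^ 2 + 1) • x - γ • phaseGrad m n a xbar ε x) :
    ∀ u : EuclideanSpace ℝ (Fin n),
      Dψ n u xp + γ * phaseObj m n a xbar ε xp ≤
        Dψ n u x - κ * Dψ n xp x - γ * Df m n a xbar ε u x
          + γ * phaseObj m n a xbar ε u := by
  intro u
  set g := phaseGrad m n a xbar ε x with hg
  set F := phaseObj m n a xbar ε with hF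
  have hup : entropyGrad n x - entropyGrad n xp = γ • g := by
    simp only [entropyGrad, hupdate]
    abel
  have h3 : Dψ n u xp - Dψ n u x + Dψ n xp x = γ * ⟪g, u - xp⟫ := by
    have h := congrArg (fun v => (⟪v, u - xp⟫ : ℝ)) hup
    simp only [real_inner_smul_left] at h
    rw [← h]
    simp only [Dψ, inner_sub_left, inner_sub_right]
    ring
  have hDnn : 0 ≤ Dψ n xp x := Dψ_nonneg n xp x
  have key : γ * Df m n a xbar ε xp x ≤ (1 - κ) * Dψ n xp x := by
    have h1 := hL xp x
    nlinarith
  have hDf_u : Df m n a xbar ε u x = F u - F x - ⟪g, u - x⟫ := rfl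
  have hDf_xp : Df m n a xbar ε xp x = F xp - F x - ⟪g, xp - x⟫ := rfl
  have e1 : ⟪g, u - xp⟫ = ⟪g, u⟫ - ⟪g, xp⟫ := inner_sub_right g u xp
  have e2 : ⟪g, u - x⟫ = ⟪g, u⟫ - ⟪g, x⟫ := inner_sub_right g u x
  have e3 : ⟪g, xp - x⟫ = ⟪g, xp⟫ - ⟪g, x⟫ := inner_sub_right g xp x
  rw [e1] at h3
  rw [hDf_xp, e3] at key
  rw [hDf_u, e2]
  linarith
end

section
/- Assume f attains its minimum on ℝⁿ. Let ρ > 0, σ > 0, κ ∈ (0,1), let L > 0 satisfy D_f(a,b) ≤ L · D_ψ(a,b) for all a, b ∈ ℝⁿ, and let γ > 0 satisfy γ·L ≤ 1 − κ and γ·σ ≤ 1. Assume D_f(x̄,x) ≥ σ · D_ψ(x̄,x) for all x in the closed ball B(x̄,ρ). Let Θ ≥ 1 and r > 0 satisfy D_ψ(x̄,u) ≤ (Θ/2)‖x̄ − u‖² for all u ∈ B(x̄,r), and r²Θ + 2‖ε‖²/(mσ) ≤ ρ². Let (x_k)_{k∈ℕ} be a sequence with x_0 ∈ B(x̄,r)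 and (‖x_{k+1}‖² + 1)x_{k+1} = (‖x_k‖² + 1)x_k − γ·∇f(x_k) for all k. Then for every k ∈ ℕ: x_k ∈ B(x̄,ρ) and D_ψ(x̄,x_k) ≤ (1 − γσ)^k · D_ψ(x̄,x_0) + (‖ε‖²/(mσ))·(1 − (1 − γσ)^k). -/
open scoped RealInnerProductSpace BigOperators

lemma dpsi_lower (n : ℕ) (p q : EuclideanSpace ℝ (Fin n)) :
    (1/2) * ‖p - q‖ ^ 2 ≤ Dψ n p q := by
  have hip : ⟪q, p⟫ ≤ ‖q‖ * ‖p‖ := real_inner_le_norm q p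
  have hsq : ⟪p - q, p - q⟫ = ‖p - q‖ ^ 2 := real_inner_self_eq_norm_sq _
  have hp : (0:ℝ) ≤ ‖p‖ := norm_nonneg _
  have hq : (0:ℝ) ≤ ‖q‖ := norm_nonneg _
  have hqq : ⟪q, q⟫ = ‖q‖ ^ 2 := real_inner_self_eq_norm_sq _
  have hpp : ⟪p, p⟫ = ‖p‖ ^ 2 := real_inner_self_eq_norm_sq _
  have hcomm : ⟪p, q⟫ = ⟪q, p⟫ := real_inner_comm _ _
  have hexp : ‖p - q‖ ^ 2 = ‖p‖^2 - 2*⟪q,p⟫ + ‖q‖^2 := by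
    rw [← hsq]
    simp only [inner_sub_left, inner_sub_right, hpp, hqq, hcomm]
    ring
  unfold Dψ entropy entropyGrad
  rw [real_inner_smul_left, inner_sub_right, hqq, hexp]
  nlinarith [mul_le_mul_of_nonneg_left hip (sq_nonneg ‖q‖),
    mul_nonneg (sq_nonneg (‖p‖ - ‖q‖)) (sq_nonneg ‖q‖),
    sq_nonneg (‖p‖^2 - ‖q‖^2)]

lemma dpsi_nonneg (n : ℕ) (p q : EuclideanSpace ℝ (Fin n)) : 0 ≤ Dψ n p q :=
  le_trans (by positivity) (dpsi_lower n p q)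

lemma phaseObj_nonneg (m n : ℕ) (hm : 1 ≤ m) (a : Fin m → EuclideanSpace ℝ (Fin n))
    (xbar : EuclideanSpace ℝ (Fin n)) (ε : Fin m → ℝ) (z : EuclideanSpace ℝ (Fin n)) :
    0 ≤ phaseObj m n a xbar ε z := by
  have hm' : (0:ℝ) < m := by exact_mod_cast hm
  have key : phaseObj m n a xbar ε z
      = ∑ r, (1/(4*(m:ℝ))) * ((⟪a r, z⟫^2 - ⟪a r, xbar⟫^2) - ε r)^2 := by
    unfold phaseObj
    rw [Finset.mul_sum, Finset.mul_sum, Finset.sum_div, ← Finset.sum_sub_distrib,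
      ← Finset.sum_add_distrib]
    refine Finset.sum_congr rfl (fun r _ => ?_)
    field_simp
    ring
  rw [key]
  apply Finset.sum_nonneg
  intro r _
  positivity

lemma phaseObj_xbar (m n : ℕ) (a : Fin m → EuclideanSpace ℝ (Fin n))
    (xbar : EuclideanSpace ℝ (Fin n)) (ε : Fin m → ℝ) :
    phaseObj m n a xbar ε xbar = (∑ r, ε r ^ 2) / (4*(m:ℝ)) := by
  unfold phaseObj
  simp

set_option maxHeartbeats 1000000 in
/-- local linear convergence of mirror descent with noise. -/
theorem stmt4 (n m : ℕ) (hm : 1 ≤ m) (a : Fin m → EuclideanSpace ℝ (Fin n))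
    (xbar : EuclideanSpace ℝ (Fin n)) (ε : Fin m → ℝ)
    (hattain : ∃ xstar : EuclideanSpace ℝ (Fin n),
      ∀ x : EuclideanSpace ℝ (Fin n), phaseObj m n a xbar ε xstar ≤ phaseObj m n a xbar ε x)
    (ρ σ κ : ℝ) (hρ : 0 < ρ) (hσ : 0 < σ) (hκ0 : 0 < κ) (hκ1 : κ < 1)
    (L : ℝ) (hLpos : 0 < L)
    (hL : ∀ p q : EuclideanSpace ℝ (Fin n), Df m n a xbar ε p q ≤ L * Dψ n p q)
    (γ : ℝ) (hγ : 0 < γ) (hγL : γ * L ≤ 1 - κ) (hγσ : γ * σ ≤ 1)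
    (hsc : ∀ x ∈ Metric.closedBall xbar ρ, Df m n a xbar ε xbar x ≥ σ * Dψ n xbar x)
    (Θ r : ℝ) (hΘ : 1 ≤ Θ) (hr : 0 < r)
    (hDψΘ : ∀ u ∈ Metric.closedBall xbar r, Dψ n xbar u ≤ (Θ / 2) * ‖xbar - u‖ ^ 2)
    (hrρ : r ^ 2 * Θ + 2 * (∑ i, ε i ^ 2) / (m * σ) ≤ ρ ^ 2)
    (x : ℕ → EuclideanSpace ℝ (Fin n)) (hx0 : x 0 ∈ Metric.closedBall xbar r)
    (hupdate : ∀ k : ℕ,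
      (‖x (k + 1)‖ ^ 2 + 1) • x (k + 1) =
        (‖x k‖ ^ 2 + 1) • x k - γ • phaseGrad m n a xbar ε (x k)) :
    ∀ k : ℕ, x k ∈ Metric.closedBall xbar ρ ∧
      Dψ n xbar (x k) ≤ (1 - γ * σ) ^ k * Dψ n xbar (x 0)
        + ((∑ i, ε i ^ 2) / (m * σ)) * (1 - (1 - γ * σ) ^ k) := by
  have hm' : (0:ℝ) < m := by exact_mod_cast hm
  have hEnn : (0:ℝ) ≤ ∑ i, ε i ^ 2 := Finset.sum_nonneg fun i _ => sq_nonneg _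
  have hC : 0 ≤ (∑ i, ε i ^ 2) / ((m:ℝ) * σ) := div_nonneg hEnn (by positivity)
  have hq0 : 0 ≤ 1 - γ * σ := by nlinarith
  have hq1 : 1 - γ * σ ≤ 1 := by nlinarith
  have hfbar := phaseObj_xbar m n a xbar ε
  -- one-step recursion
  have hrec : ∀ k, x k ∈ Metric.closedBall xbar ρ →
      Dψ n xbar (x (k+1)) ≤ (1 - γ * σ) * Dψ n xbar (x k)
        + γ * ((∑ i, ε i ^ 2) / (m:ℝ)) := by
    intro k hball
    have hg : entropyGrad n (x k) - entropyGrad n (x (k+1))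
        = γ • phaseGrad m n a xbar ε (x k) := by
      unfold entropyGrad
      rw [hupdate k]
      exact sub_sub_cancel _ _
    have hiden : Dψ n xbar (x (k+1)) = Dψ n xbar (x k) - Dψ n (x (k+1)) (x k)
        + ⟪entropyGrad n (x k) - entropyGrad n (x (k+1)), xbar - x (k+1)⟫ := by
      unfold Dψ
      simp only [inner_sub_left, inner_sub_right]
      ring
    rw [hg, real_inner_smul_left] at hiden
    have hsplit : ⟪phaseGrad m n a xbar ε (x k), xbar - x (k+1)⟫
        = ⟪phaseGrad m n a xbar ε (x k), xbar - x k⟫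
          + ⟪phaseGrad m n a xbar ε (x k), x k - x (k+1)⟫ := by
      rw [← inner_add_right]
      congr 1
      abel
    have h1 : ⟪phaseGrad m n a xbar ε (x k), xbar - x k⟫
        = phaseObj m n a xbar ε xbar - phaseObj m n a xbar ε (x k)
          - Df m n a xbar ε xbar (x k) := by
      unfold Df; ring
    have h2 : ⟪phaseGrad m n a xbar ε (x k), x k - x (k+1)⟫
        = Df m n a xbar ε (x (k+1)) (x k) + phaseObj m n a xbar ε (x k)
          - phaseObj m n a xbar ε (x (k+1)) := by
      have hneg : (x k - x (k+1) : EuclideanSpace ℝ (Fin n)) = -(x (k+1) - x k) := by abel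
      rw [hneg, inner_neg_right]
      unfold Df; ring
    have hDψvu : 0 ≤ Dψ n (x (k+1)) (x k) := dpsi_nonneg _ _ _
    have hLb : Df m n a xbar ε (x (k+1)) (x k) ≤ L * Dψ n (x (k+1)) (x k) := hL _ _
    have hscb : σ * Dψ n xbar (x k) ≤ Df m n a xbar ε xbar (x k) := hsc (x k) hball
    have hfv : 0 ≤ phaseObj m n a xbar ε (x (k+1)) := phaseObj_nonneg m n hm a xbar ε _
    have hdiv : (∑ i, ε i ^ 2) / (4*(m:ℝ)) ≤ (∑ i, ε i ^ 2) / (m:ℝ) := by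
      rw [div_le_div_iff₀ (by positivity) hm']
      nlinarith
    rw [hiden, hsplit, h1, h2, hfbar]
    linarith [mul_le_mul_of_nonneg_left hLb hγ.le,
      mul_le_mul_of_nonneg_right hγL hDψvu,
      mul_le_mul_of_nonneg_left hscb hγ.le,
      mul_nonneg hγ.le hfv,
      mul_nonneg hκ0.le hDψvu,
      mul_le_mul_of_nonneg_left hdiv hγ.le]
  have hD0nn : 0 ≤ Dψ n xbar (x 0) := dpsi_nonneg _ _ _
  have hD0 : Dψ n xbar (x 0) ≤ Θ / 2 * r ^ 2 := by
    have h1 := hDψΘ (x 0) hx0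
    have h2 : ‖xbar - x 0‖ ≤ r := by
      rw [Metric.mem_closedBall, dist_eq_norm] at hx0
      rwa [norm_sub_rev]
    have h3 : ‖xbar - x 0‖ ^ 2 ≤ r ^ 2 := by nlinarith [norm_nonneg (xbar - x 0)]
    have h4 : Θ / 2 * ‖xbar - x 0‖ ^ 2 ≤ Θ / 2 * r ^ 2 :=
      mul_le_mul_of_nonneg_left h3 (by linarith)
    linarith
  have h2C : 2 * (∑ i, ε i ^ 2) / ((m:ℝ) * σ) = 2 * ((∑ i, ε i ^ 2) / ((m:ℝ) * σ)) := by
    ring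
  -- bound implies membership in the big ball
  have hball_of : ∀ k, Dψ n xbar (x k) ≤ (1 - γ * σ) ^ k * Dψ n xbar (x 0)
      + ((∑ i, ε i ^ 2) / (m * σ)) * (1 - (1 - γ * σ) ^ k) →
      x k ∈ Metric.closedBall xbar ρ := by
    intro k hk
    have hqk0 : 0 ≤ (1 - γ * σ) ^ k := pow_nonneg hq0 k
    have hqk1 : (1 - γ * σ) ^ k ≤ 1 := pow_le_one₀ hq0 hq1
    have hbd : Dψ n xbar (x k) ≤ ρ ^ 2 / 2 := by
      nlinarith [mul_le_mul_of_nonneg_right hqk1 hD0nn, mul_nonneg hC hqk0]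
    have hlow := dpsi_lower n xbar (x k)
    rw [Metric.mem_closedBall, dist_eq_norm]
    have hn : ‖x k - xbar‖ = ‖xbar - x k‖ := norm_sub_rev _ _
    rw [hn]
    nlinarith [norm_nonneg (xbar - x k)]
  -- main induction
  have main : ∀ k, Dψ n xbar (x k) ≤ (1 - γ * σ) ^ k * Dψ n xbar (x 0)
      + ((∑ i, ε i ^ 2) / (m * σ)) * (1 - (1 - γ * σ) ^ k) := by
    intro k
    induction k with
    | zero => simp
    | succ k ih =>
      have hball := hball_of k ih
      have hrk := hrec k hball
      have step : (1 - γ * σ) * ((1 - γ * σ) ^ k * Dψ n xbar (x 0)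
            + ((∑ i, ε i ^ 2) / (m * σ)) * (1 - (1 - γ * σ) ^ k))
            + γ * ((∑ i, ε i ^ 2) / (m:ℝ))
          = (1 - γ * σ) ^ (k+1) * Dψ n xbar (x 0)
            + ((∑ i, ε i ^ 2) / (m * σ)) * (1 - (1 - γ * σ) ^ (k+1)) := by
        field_simp
        ring
      have hmul := mul_le_mul_of_nonneg_left ih hq0
      linarith [step, hrk, hmul]
  intro k
  exact ⟨hball_of k (main k), main k⟩
end

section
/- For all x, u ∈ ℝⁿ and every ε ∈ ℝᵐ: ∫ (1/m) Σ_{r=1}^m (3⟨a_r,x⟩² − ⟨a_r,x̄⟩² − ε_r)⟨a_r,u⟩² dμ(a_1,…,a_m) = 6⟨x,u⟩² + 3‖x‖²‖u‖² − 2⟨x̄,u⟩² − ‖x̄‖²‖u‖² − ε̃‖u‖². (The integrand is the Hessian quadratic form ⟨u, ∇²f(x) u⟩ of the noisy phase-retrieval objective, so this computes the expected Hessian E[∇²f(x)] = 3(2xxᵀ + ‖x‖²I) − 2x̄x̄ᵀ − ‖x̄‖²I − ε̃I.) -/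
open scoped RealInnerProductSpace BigOperators

open MeasureTheory ProbabilityTheory

/-- The standard Gaussian measure on `ℝⁿ` (all coordinates i.i.d. `N(0,1)`). -/
noncomputable def stdGaussianE (n : ℕ) : Measure (EuclideanSpace ℝ (Fin n)) :=
  Measure.map (WithLp.toLp 2) (Measure.pi fun _ : Fin n => gaussianReal 0 1)

/-- The law of `m` i.i.d. standard Gaussian vectors in `ℝⁿ`. -/
noncomputable def gaussProduct (n m : ℕ) : Measure (Fin m → EuclideanSpace ℝ (Fin n)) :=
  Measure.pi fun _ : Fin m => stdGaussianE n


open Real Fintype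
open scoped ENNReal NNReal

section Aux

lemma integrable_pow_gauss (k : ℕ) : Integrable (fun x : ℝ => x ^ k * Real.exp (-(1/2) * x ^ 2)) := by
  have hs : (-1 : ℝ) < (k : ℝ) := lt_of_lt_of_le neg_one_lt_zero (Nat.cast_nonneg k)
  have := integrable_rpow_mul_exp_neg_mul_sq (b := 1/2) (by norm_num) hs
  simpa [Real.rpow_natCast] using this

lemma gauss_rec (k : ℕ) :
    (∫ x : ℝ, x ^ (k+2) * Real.exp (-(1/2) * x ^ 2)) =
      (k+1 : ℝ) * ∫ x : ℝ, x ^ k * Real.exp (-(1/2) * x ^ 2) := by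
  have hderiv : ∀ x : ℝ, HasDerivAt (fun x : ℝ => x ^ (k+1) * Real.exp (-(1/2) * x ^ 2))
      ((k+1 : ℝ) * (x ^ k * Real.exp (-(1/2) * x ^ 2)) - x ^ (k+2) * Real.exp (-(1/2) * x ^ 2)) x := by
    intro x
    have h1 : HasDerivAt (fun x : ℝ => x ^ (k+1)) ((k+1 : ℝ) * x ^ k) x := by
      simpa using hasDerivAt_pow (k+1) x
    have h2 : HasDerivAt (fun x : ℝ => Real.exp (-(1/2) * x ^ 2)) ((-(1/2) * (2 * x)) * Real.exp (-(1/2) * x ^ 2)) x := by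
      have hx : HasDerivAt (fun x : ℝ => -(1/2 : ℝ) * x ^ 2) (-(1/2) * (2 * x)) x := by
        simpa using ((hasDerivAt_pow 2 x).const_mul (-(1/2 : ℝ)))
      simpa [mul_comm] using hx.exp
    have := h1.fun_mul h2
    exact this.congr_deriv (by ring)
  have h0 : (∫ x : ℝ, ((k+1 : ℝ) * (x ^ k * Real.exp (-(1/2) * x ^ 2)) - x ^ (k+2) * Real.exp (-(1/2) * x ^ 2))) = 0 := by
    apply integral_eq_zero_of_hasDerivAt_of_integrable hderiv
    · exact (((integrable_pow_gauss k).const_mul _).sub (integrable_pow_gauss (k+2)))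
    · exact integrable_pow_gauss (k+1)
  rw [integral_sub (((integrable_pow_gauss k).const_mul ((k+1:ℝ)))) (integrable_pow_gauss (k+2)),
    integral_const_mul] at h0
  linarith [h0]

lemma gauss_odd1 : (∫ x : ℝ, x ^ 1 * Real.exp (-(1/2) * x ^ 2)) = 0 := by
  have hderiv : ∀ x : ℝ, HasDerivAt (fun x : ℝ => -Real.exp (-(1/2) * x ^ 2))
      (x ^ 1 * Real.exp (-(1/2) * x ^ 2)) x := by
    intro x
    have h2 : HasDerivAt (fun x : ℝ => Real.exp (-(1/2) * x ^ 2)) ((-(1/2) * (2 * x)) * Real.exp (-(1/2) * x ^ 2)) x := by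
      have hx : HasDerivAt (fun x : ℝ => -(1/2 : ℝ) * x ^ 2) (-(1/2) * (2 * x)) x := by
        simpa using ((hasDerivAt_pow 2 x).const_mul (-(1/2 : ℝ)))
      simpa [mul_comm] using hx.exp
    have := h2.fun_neg
    exact this.congr_deriv (by ring)
  apply integral_eq_zero_of_hasDerivAt_of_integrable hderiv (integrable_pow_gauss 1)
  exact ((integrable_pow_gauss 0).neg).congr (Filter.Eventually.of_forall (by simp))

lemma gauss_even0 : (∫ x : ℝ, x ^ 0 * Real.exp (-(1/2) * x ^ 2)) = Real.sqrt (2 * Real.pi) := by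
  simp only [pow_zero, one_mul]
  have := integral_gaussian (1/2)
  rw [show Real.pi / (1/2) = 2 * Real.pi by ring] at this
  simpa using this

lemma gaussianPDFReal_01 (x : ℝ) :
    gaussianPDFReal 0 1 x = (Real.sqrt (2 * Real.pi))⁻¹ * Real.exp (-(1/2) * x ^ 2) := by
  rw [gaussianPDFReal]
  push_cast
  rw [show ((2:ℝ) * Real.pi * 1) = 2 * Real.pi by ring]
  congr 1
  ring

lemma pdf_toNNReal : gaussianPDF 0 1 = fun x => ((Real.toNNReal (gaussianPDFReal 0 1 x)) : ℝ≥0∞) := rfl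

lemma integral_gaussianReal_eq (g : ℝ → ℝ) :
    ∫ x, g x ∂(gaussianReal 0 1) = ∫ x, gaussianPDFReal 0 1 x * g x := by
  rw [gaussianReal_of_var_ne_zero 0 one_ne_zero, pdf_toNNReal,
    integral_withDensity_eq_integral_smul
      ((measurable_gaussianPDFReal 0 1).real_toNNReal)]
  congr 1
  funext x
  simp [NNReal.smul_def, smul_eq_mul, Real.coe_toNNReal _ (gaussianPDFReal_nonneg 0 1 x)]

lemma integrable_gaussianReal_iff (g : ℝ → ℝ) :
    Integrable g (gaussianReal 0 1) ↔ Integrable (fun x => gaussianPDFReal 0 1 x * g x) := by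
  rw [gaussianReal_of_var_ne_zero 0 one_ne_zero, pdf_toNNReal,
    integrable_withDensity_iff_integrable_smul
      ((measurable_gaussianPDFReal 0 1).real_toNNReal)]
  exact integrable_congr (Filter.Eventually.of_forall fun x => by
    simp [NNReal.smul_def, smul_eq_mul, Real.coe_toNNReal _ (gaussianPDFReal_nonneg 0 1 x)])

lemma integrable_pow_gaussianReal (k : ℕ) : Integrable (fun x : ℝ => x ^ k) (gaussianReal 0 1) := by
  rw [integrable_gaussianReal_iff]
  have := (integrable_pow_gauss k).const_mul (Real.sqrt (2 * Real.pi))⁻¹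
  apply this.congr
  filter_upwards with x
  rw [gaussianPDFReal_01]
  ring

noncomputable def mom (k : ℕ) : ℝ := ∫ x : ℝ, x ^ k ∂(gaussianReal 0 1)

lemma mom_eq (k : ℕ) : mom k = (Real.sqrt (2 * Real.pi))⁻¹ * ∫ x : ℝ, x ^ k * Real.exp (-(1/2) * x ^ 2) := by
  rw [mom, integral_gaussianReal_eq, ← integral_const_mul]
  congr 1; funext x; rw [gaussianPDFReal_01]; ring

lemma sqrt_two_pi_pos : (0:ℝ) < Real.sqrt (2 * Real.pi) := Real.sqrt_pos.2 (by positivity)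

lemma mom_zero : mom 0 = 1 := by
  rw [mom_eq, gauss_even0]
  field_simp
lemma mom_one : mom 1 = 0 := by rw [mom_eq, gauss_odd1]; ring
lemma mom_two : mom 2 = 1 := by
  have := gauss_rec 0
  rw [mom_eq, this, gauss_even0]
  field_simp
  norm_num
lemma mom_three : mom 3 = 0 := by
  have := gauss_rec 1
  rw [mom_eq, this, gauss_odd1]; ring
lemma mom_four : mom 4 = 3 := by
  have h2 := gauss_rec 2
  have h0 := gauss_rec 0
  rw [mom_eq, h2, h0, gauss_even0]
  rw [show ((2:ℕ)+1 : ℝ) * (((0:ℕ)+1 : ℝ) * Real.sqrt (2*Real.pi)) = 3 * Real.sqrt (2*Real.pi) by push_cast; ring]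
  field_simp

variable {E : Type*} [MeasurableSpace E]

theorem my_integrable_prod {n : ℕ} (μ : Measure E) [IsProbabilityMeasure μ]
    {f : Fin n → E → ℝ} (hf : ∀ i, Integrable (f i) μ) :
    Integrable (fun (x : Fin n → E) ↦ ∏ i, f i (x i)) (Measure.pi fun _ => μ) := by
  induction n with
  | zero => simp only [Finset.univ_eq_empty, Finset.prod_empty]
            exact integrable_const _
  | succ n n_ih =>
      have := ((measurePreserving_piFinSuccAbove (fun _ : Fin (n+1) => μ) 0).symm)
      rw [← this.integrable_comp_emb (MeasurableEquiv.measurableEmbedding _)]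
      simp_rw [MeasurableEquiv.piFinSuccAbove_symm_apply, Fin.insertNthEquiv,
        Fin.prod_univ_succ, Fin.insertNth_zero]
      simp only [Fin.zero_succAbove, Function.comp_def, Fin.cons_zero, Fin.cons_succ,
        Equiv.coe_fn_mk]
      have h2 : Integrable (fun (x : Fin n → E) ↦ ∏ j, f (Fin.succ j) (x j)) (Measure.pi fun _ => μ) :=
        n_ih (fun i ↦ hf _)
      exact Integrable.mul_prod (hf 0) h2

theorem my_integral_prod {n : ℕ} (μ : Measure E) [IsProbabilityMeasure μ]
    (f : Fin n → E → ℝ) :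
    ∫ x : Fin n → E, ∏ i, f i (x i) ∂(Measure.pi fun _ => μ) = ∏ i, ∫ x, f i x ∂μ := by
  induction n with
  | zero => simp
  | succ n n_ih =>
      calc
        _ = ∫ x : E × (Fin n → E),
            f 0 x.1 * ∏ i : Fin n, f (Fin.succ i) (x.2 i) ∂(μ.prod (Measure.pi fun _ => μ)) := by
          rw [← ((measurePreserving_piFinSuccAbove
            (fun _ : Fin (n+1) => μ) 0).symm).integral_comp']
          congr 1
          funext x
          rw [Fin.prod_univ_succ]
          simp [MeasurableEquiv.piFinSuccAbove_symm_apply, Fin.insertNthEquiv, Fin.insertNth_zero,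
            Fin.zero_succAbove]
        _ = (∫ x, f 0 x ∂μ) * ∏ i : Fin n, ∫ x : E, f (Fin.succ i) x ∂μ := by
          rw [← n_ih, ← integral_prod_mul]
        _ = ∏ i, ∫ x, f i x ∂μ := by rw [Fin.prod_univ_succ]

theorem my_integrable_eval {n : ℕ} (μ : Measure E) [IsProbabilityMeasure μ]
    {g : E → ℝ} (hg : Integrable g μ) (r : Fin n) :
    Integrable (fun x : Fin n → E => g (x r)) (Measure.pi fun _ => μ) := by
  have h := my_integrable_prod μ (f := fun i => if i = r then g else fun _ => 1)
    (fun i => by by_cases hi : i = r <;> simp [hi, hg, integrable_const])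
  apply h.congr
  filter_upwards with x
  rw [show (∏ i, (if i = r then g else fun _ => (1:ℝ)) (x i)) = ∏ i, (if i = r then g (x i) else 1) from Finset.prod_congr rfl (fun i _ => by split <;> rfl)]
  simp

theorem my_integral_eval {n : ℕ} (μ : Measure E) [IsProbabilityMeasure μ]
    (g : E → ℝ) (r : Fin n) :
    ∫ x : Fin n → E, g (x r) ∂(Measure.pi fun _ => μ) = ∫ y, g y ∂μ := by
  have h := my_integral_prod μ (f := fun i => if i = r then g else fun _ => 1)
  rw [show (∫ x : Fin n → E, g (x r) ∂(Measure.pi fun _ => μ)) = ∫ x : Fin n → E, ∏ i, (if i = r then g else fun _ => (1:ℝ)) (x i) ∂(Measure.pi fun _ => μ) by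
    congr 1; funext x
    rw [show (∏ i, (if i = r then g else fun _ => (1:ℝ)) (x i)) = ∏ i, (if i = r then g (x i) else 1) from Finset.prod_congr rfl (fun i _ => by split <;> rfl)]
    simp, h]
  rw [show (∏ i, ∫ y, (if i = r then g else fun _ => (1:ℝ)) y ∂μ) = ∏ i, (if i = r then ∫ y, g y ∂μ else 1) from Finset.prod_congr rfl (fun i _ => by split <;> simp)]
  simp



noncomputable def gammaN (n : ℕ) : Measure (Fin n → ℝ) := Measure.pi fun _ => gaussianReal 0 1
instance (n : ℕ) : IsProbabilityMeasure (gammaN n) := by unfold gammaN; infer_instance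

def cnt {n : ℕ} (i j k l p : Fin n) : ℕ :=
  (if p = i then 1 else 0) + (if p = j then 1 else 0) + (if p = k then 1 else 0) + (if p = l then 1 else 0)

lemma mono_expand {n : ℕ} (i j k l : Fin n) (x : Fin n → ℝ) :
    x i * x j * (x k * x l) = ∏ p, (x p) ^ (cnt i j k l p) := by
  have h : ∀ q : Fin n, (∏ p, (x p) ^ (if p = q then 1 else 0)) = x q := by
    intro q
    rw [show (∏ p, (x p) ^ (if p = q then 1 else 0)) = ∏ p, (if p = q then x p else 1) from
      Finset.prod_congr rfl (fun p _ => by split <;> simp)]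
    simp
  simp only [cnt, pow_add, Finset.prod_mul_distrib, h]
  ring

lemma integrable_mono4 {n : ℕ} (i j k l : Fin n) :
    Integrable (fun x : Fin n → ℝ => x i * x j * (x k * x l)) (gammaN n) := by
  have h := my_integrable_prod (gaussianReal 0 1)
    (f := fun p (y : ℝ) => y ^ (cnt i j k l p)) (fun p => integrable_pow_gaussianReal _)
  apply h.congr
  filter_upwards with x
  exact (mono_expand i j k l x).symm

lemma integral_mono4 {n : ℕ} (i j k l : Fin n) :
    ∫ x : Fin n → ℝ, x i * x j * (x k * x l) ∂(gammaN n) = ∏ p, mom (cnt i j k l p) := by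
  rw [show (fun x : Fin n → ℝ => x i * x j * (x k * x l)) = fun x => ∏ p, (x p) ^ (cnt i j k l p) from funext (mono_expand i j k l)]
  exact my_integral_prod _ _

lemma prod_mom_single {n : ℕ} (i : Fin n) (e : Fin n → ℕ) (he : ∀ p, p ≠ i → e p = 0) :
    ∏ p, mom (e p) = mom (e i) := by
  apply Finset.prod_eq_single
  · intro p _ hp; rw [he p hp, mom_zero]
  · intro h; exact absurd (Finset.mem_univ i) h

lemma prod_mom_pair {n : ℕ} {i k : Fin n} (hik : i ≠ k) (e : Fin n → ℕ)
    (he : ∀ p, p ≠ i → p ≠ k → e p = 0) :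
    ∏ p, mom (e p) = mom (e i) * mom (e k) := by
  rw [← Finset.mul_prod_erase Finset.univ _ (Finset.mem_univ i)]
  congr 1
  apply Finset.prod_eq_single
  · intro p hp hpk
    rw [he p (Finset.ne_of_mem_erase hp) hpk, mom_zero]
  · intro h
    exact absurd (Finset.mem_erase.2 ⟨Ne.symm hik, Finset.mem_univ k⟩) h



lemma itep1 {α : Type*} [DecidableEq α] {a b c d : α} (h1 : a = b) (h2 : c = d) :
    (if a = b then (1:ℝ) else 0) * (if c = d then 1 else 0) = 1 := by
  rw [if_pos h1, if_pos h2]; norm_num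

lemma itep0 {α : Type*} [DecidableEq α] {a b c d : α} (h : ¬(a = b ∧ c = d)) :
    (if a = b then (1:ℝ) else 0) * (if c = d then 1 else 0) = 0 := by
  by_cases h1 : a = b
  · rw [if_neg (fun h2 => h ⟨h1, h2⟩)]; norm_num
  · rw [if_neg h1]; norm_num

lemma cnt_def {n : ℕ} (i j k l q : Fin n) :
    cnt i j k l q = (if q = i then 1 else 0) + (if q = j then 1 else 0)
      + (if q = k then 1 else 0) + (if q = l then 1 else 0) := rfl

lemma T_eq {n : ℕ} (i j k l : Fin n) :
    ∫ x : Fin n → ℝ, x i * x j * (x k * x l) ∂(gammaN n) =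
      (if i = j then 1 else 0) * (if k = l then 1 else 0)
      + (if i = k then 1 else 0) * (if j = l then 1 else 0)
      + (if i = l then 1 else 0) * (if j = k then 1 else 0) := by
  rw [integral_mono4]
  by_cases hij : i = j
  · by_cases hkl : k = l
    · by_cases hik : i = k
      · -- all equal
        have hil : i = l := hik.trans hkl
        have hjl : j = l := hij.symm.trans hil
        have hjk : j = k := hij.symm.trans hik
        have key : ∀ p, p ≠ i → cnt i j k l p = 0 := by
          intro p hp
          rw [cnt_def, if_neg hp, if_neg (fun h => hp (h.trans hij.symm)),
            if_neg (fun h => hp (h.trans hik.symm)), if_neg (fun h => hp (h.trans hil.symm))]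
        rw [prod_mom_single i _ key,
          show cnt i j k l i = 4 by rw [cnt_def, if_pos rfl, if_pos hij, if_pos hik, if_pos hil],
          itep1 hij hkl, itep1 hik hjl, itep1 hil hjk, mom_four]
        norm_num
      · -- i = j, k = l, i ≠ k
        have hil : ¬ i = l := fun h => hik (h.trans hkl.symm)
        have hjk : ¬ j = k := fun h => hik (hij.trans h)
        have hjl : ¬ j = l := fun h => hil (hij.trans h)
        have key : ∀ p, p ≠ i → p ≠ k → cnt i j k l p = 0 := by
          intro p hp1 hp2
          rw [cnt_def, if_neg hp1, if_neg (fun h => hp1 (h.trans hij.symm)),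
            if_neg hp2, if_neg (fun h => hp2 (h.trans hkl.symm))]
        rw [prod_mom_pair hik _ key,
          show cnt i j k l i = 2 by
            rw [cnt_def, if_pos rfl, if_pos hij, if_neg hik, if_neg hil],
          show cnt i j k l k = 2 by
            rw [cnt_def, if_neg (fun h => hik h.symm), if_neg (fun h => hjk h.symm),
              if_pos rfl, if_pos hkl],
          mom_two, itep1 hij hkl, itep0 (fun h => hik h.1), itep0 (fun h => hil h.1)]
        norm_num
    · -- i = j, k ≠ l : zero
      have hodd : mom (cnt i j k l k) = 0 := by
        by_cases hki : k = i
        · rw [show cnt i j k l k = 3 by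
            rw [cnt_def, if_pos hki, if_pos (hki.trans hij), if_pos rfl, if_neg hkl]]
          exact mom_three
        · rw [show cnt i j k l k = 1 by
            rw [cnt_def, if_neg hki, if_neg (fun h => hki (h.trans hij.symm)),
              if_pos rfl, if_neg hkl]]
          exact mom_one
      rw [Finset.prod_eq_zero (Finset.mem_univ k) hodd,
        itep0 (fun h => hkl h.2),
        itep0 (fun h => hkl (h.1.symm.trans (hij.trans h.2))),
        itep0 (fun h => hkl ((h.2.symm.trans hij.symm).trans h.1))]
      norm_num
  · by_cases hkl : k = l
    · -- i ≠ j, k = l : zero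
      have hodd : mom (cnt i j k l i) = 0 := by
        by_cases hik : i = k
        · rw [show cnt i j k l i = 3 by
            rw [cnt_def, if_pos rfl, if_neg hij, if_pos hik, if_pos (hik.trans hkl)]]
          exact mom_three
        · rw [show cnt i j k l i = 1 by
            rw [cnt_def, if_pos rfl, if_neg hij, if_neg hik,
              if_neg (fun h => hik (h.trans hkl.symm))]]
          exact mom_one
      rw [Finset.prod_eq_zero (Finset.mem_univ i) hodd,
        itep0 (fun h => hij h.1),
        itep0 (fun h => hij (h.1.trans (hkl.trans h.2.symm))),
        itep0 (fun h => hij (h.1.trans (hkl.symm.trans h.2.symm)))]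
      norm_num
    · -- i ≠ j, k ≠ l
      by_cases hik : i = k
      · by_cases hjl : j = l
        · -- pairs (i,k), (j,l)
          have hjk : ¬ j = k := fun h => hij (hik.trans h.symm)
          have hil : ¬ i = l := fun h => hkl (hik.symm.trans h)
          have key : ∀ p, p ≠ i → p ≠ j → cnt i j k l p = 0 := by
            intro p hp1 hp2
            rw [cnt_def, if_neg hp1, if_neg hp2,
              if_neg (fun h => hp1 (h.trans hik.symm)), if_neg (fun h => hp2 (h.trans hjl.symm))]
          rw [prod_mom_pair hij _ key,
            show cnt i j k l i = 2 by
              rw [cnt_def, if_pos rfl, if_neg hij, if_pos hik, if_neg hil],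
            show cnt i j k l j = 2 by
              rw [cnt_def, if_neg (fun h => hij h.symm), if_pos rfl, if_neg hjk, if_pos hjl],
            mom_two, itep0 (fun h => hij h.1), itep1 hik hjl, itep0 (fun h => hil h.1)]
          norm_num
        · -- i = k, j ≠ l : zero at j
          have hji : ¬ j = i := fun h => hij h.symm
          have hjk : ¬ j = k := fun h => hji (h.trans hik.symm)
          have hodd : mom (cnt i j k l j) = 0 := by
            rw [show cnt i j k l j = 1 by
              rw [cnt_def, if_neg hji, if_pos rfl, if_neg hjk, if_neg hjl]]
            exact mom_one
          rw [Finset.prod_eq_zero (Finset.mem_univ j) hodd,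
            itep0 (fun h => hij h.1),
            itep0 (fun h => hjl h.2),
            itep0 (fun h => hkl (hik.symm.trans h.1))]
          norm_num
      · by_cases hil : i = l
        · by_cases hjk : j = k
          · -- pairs (i,l), (j,k)
            have hjl : ¬ j = l := fun h => hij (hil.trans h.symm)
            have key : ∀ p, p ≠ i → p ≠ j → cnt i j k l p = 0 := by
              intro p hp1 hp2
              rw [cnt_def, if_neg hp1, if_neg hp2,
                if_neg (fun h => hp2 (h.trans hjk.symm)), if_neg (fun h => hp1 (h.trans hil.symm))]
            rw [prod_mom_pair hij _ key,
              show cnt i j k l i = 2 by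
                rw [cnt_def, if_pos rfl, if_neg hij, if_neg hik, if_pos hil],
              show cnt i j k l j = 2 by
                rw [cnt_def, if_neg (fun h => hij h.symm), if_pos rfl, if_pos hjk,
                  if_neg hjl],
              mom_two, itep0 (fun h => hij h.1), itep0 (fun h => hik h.1), itep1 hil hjk]
            norm_num
          · -- i = l, j ≠ k : zero at k
            have hki : ¬ k = i := fun h => hik h.symm
            have hkj : ¬ k = j := fun h => hjk h.symm
            have hodd : mom (cnt i j k l k) = 0 := by
              rw [show cnt i j k l k = 1 by
                rw [cnt_def, if_neg hki, if_neg hkj, if_pos rfl, if_neg hkl]]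
              exact mom_one
            rw [Finset.prod_eq_zero (Finset.mem_univ k) hodd,
              itep0 (fun h => hij h.1),
              itep0 (fun h => hik h.1),
              itep0 (fun h => hjk h.2)]
            norm_num
        · -- i ∉ {j,k,l} : zero at i
          have hodd : mom (cnt i j k l i) = 0 := by
            rw [show cnt i j k l i = 1 by
              rw [cnt_def, if_pos rfl, if_neg hij, if_neg hik, if_neg hil]]
            exact mom_one
          rw [Finset.prod_eq_zero (Finset.mem_univ i) hodd,
            itep0 (fun h => hij h.1),
            itep0 (fun h => hik h.1),
            itep0 (fun h => hil h.1)]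
          norm_num

def cnt2 {n : ℕ} (i k p : Fin n) : ℕ := (if p = i then 1 else 0) + (if p = k then 1 else 0)

lemma mono2_expand {n : ℕ} (i k : Fin n) (x : Fin n → ℝ) :
    x i * x k = ∏ p, (x p) ^ (cnt2 i k p) := by
  have h : ∀ q : Fin n, (∏ p, (x p) ^ (if p = q then 1 else 0)) = x q := by
    intro q
    rw [show (∏ p, (x p) ^ (if p = q then 1 else 0)) = ∏ p, (if p = q then x p else 1) from
      Finset.prod_congr rfl (fun p _ => by split <;> simp)]
    simp
  simp only [cnt2, pow_add, Finset.prod_mul_distrib, h]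

lemma integrable_mono2 {n : ℕ} (i k : Fin n) :
    Integrable (fun x : Fin n → ℝ => x i * x k) (gammaN n) := by
  have h := my_integrable_prod (gaussianReal 0 1)
    (f := fun p (y : ℝ) => y ^ (cnt2 i k p)) (fun p => integrable_pow_gaussianReal _)
  apply h.congr
  filter_upwards with x
  exact (mono2_expand i k x).symm

lemma T2_eq {n : ℕ} (i k : Fin n) :
    ∫ x : Fin n → ℝ, x i * x k ∂(gammaN n) = if i = k then 1 else 0 := by
  have hv : ∫ x : Fin n → ℝ, ∏ p, (x p) ^ (cnt2 i k p) ∂(gammaN n) = ∏ p, mom (cnt2 i k p) :=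
    my_integral_prod _ _
  rw [show (fun x : Fin n → ℝ => x i * x k) = fun x => ∏ p, (x p) ^ (cnt2 i k p) from
      funext (mono2_expand i k), hv]
  by_cases hik : i = k
  · rw [prod_mom_single i _ (fun p hp => by
      rw [cnt2, if_neg hp, if_neg (fun h => hp (h.trans hik.symm))]),
      show cnt2 i k i = 2 by rw [cnt2, if_pos rfl, if_pos hik], mom_two, if_pos hik]
  · rw [Finset.prod_eq_zero (Finset.mem_univ i)
      (by rw [show cnt2 i k i = 1 by rw [cnt2, if_pos rfl, if_neg hik]]; exact mom_one),
      if_neg hik]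



section Keys
variable {n : ℕ}

lemma x2_expand (v u : Fin n → ℝ) (x : Fin n → ℝ) :
    (∑ p, x p * v p) * (∑ q, x q * u q) = ∑ p, ∑ q, (v p * u q) * (x p * x q) := by
  rw [Finset.sum_mul_sum]
  exact Finset.sum_congr rfl fun p _ => Finset.sum_congr rfl fun q _ => by ring

lemma integrable_X2 (v u : Fin n → ℝ) :
    Integrable (fun x : Fin n → ℝ => (∑ p, x p * v p) * (∑ q, x q * u q)) (gammaN n) := by
  simp only [x2_expand]
  apply integrable_finset_sum; intro p _
  apply integrable_finset_sum; intro q _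
  exact (integrable_mono2 p q).const_mul _

lemma integral_X2 (v u : Fin n → ℝ) :
    ∫ x : Fin n → ℝ, (∑ p, x p * v p) * (∑ q, x q * u q) ∂(gammaN n) = ∑ p, v p * u p := by
  simp only [x2_expand]
  rw [integral_finset_sum _ (fun p _ => integrable_finset_sum _
    (fun q _ => (integrable_mono2 p q).const_mul _))]
  rw [Finset.sum_congr rfl (fun p _ => integral_finset_sum _
    (fun q _ => (integrable_mono2 p q).const_mul _))]
  rw [Finset.sum_congr rfl (fun p _ => Finset.sum_congr rfl
    (fun q _ => integral_const_mul _ _))]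
  simp only [T2_eq]
  simp [Finset.sum_ite_eq', mul_ite, mul_one, mul_zero]

lemma x4_expand (v w u s : Fin n → ℝ) (x : Fin n → ℝ) :
    ((∑ p, x p * v p) * (∑ p, x p * w p)) * ((∑ p, x p * u p) * (∑ p, x p * s p)) =
      ∑ i, ∑ k, ∑ j, ∑ l, (v i * w j * (u k * s l)) * (x i * x j * (x k * x l)) := by
  rw [x2_expand v w, x2_expand u s, Finset.sum_mul_sum]
  apply Finset.sum_congr rfl; intro i _
  apply Finset.sum_congr rfl; intro k _
  rw [Finset.sum_mul_sum]
  apply Finset.sum_congr rfl; intro j _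
  apply Finset.sum_congr rfl; intro l _
  ring

lemma integrable_X4 (v w u s : Fin n → ℝ) :
    Integrable (fun x : Fin n → ℝ =>
      ((∑ p, x p * v p) * (∑ p, x p * w p)) * ((∑ p, x p * u p) * (∑ p, x p * s p))) (gammaN n) := by
  simp only [x4_expand]
  apply integrable_finset_sum; intro i _
  apply integrable_finset_sum; intro k _
  apply integrable_finset_sum; intro j _
  apply integrable_finset_sum; intro l _
  exact (integrable_mono4 i j k l).const_mul _

lemma integral_X4 (v u : Fin n → ℝ) :
    ∫ x : Fin n → ℝ,
      ((∑ p, x p * v p) * (∑ p, x p * v p)) * ((∑ p, x p * u p) * (∑ p, x p * u p)) ∂(gammaN n) =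
      (∑ p, v p * v p) * (∑ p, u p * u p) + 2 * (∑ p, v p * u p) ^ 2 := by
  simp only [x4_expand]
  rw [integral_finset_sum _ (fun i _ => integrable_finset_sum _ (fun k _ =>
    integrable_finset_sum _ (fun j _ => integrable_finset_sum _ (fun l _ =>
      (integrable_mono4 i j k l).const_mul _))))]
  rw [Finset.sum_congr rfl (fun i _ => integral_finset_sum _ (fun k _ =>
    integrable_finset_sum _ (fun j _ => integrable_finset_sum _ (fun l _ =>
      (integrable_mono4 i j k l).const_mul _))))]
  rw [Finset.sum_congr rfl (fun i _ => Finset.sum_congr rfl (fun k _ =>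
    integral_finset_sum _ (fun j _ => integrable_finset_sum _ (fun l _ =>
      (integrable_mono4 i j k l).const_mul _))))]
  rw [Finset.sum_congr rfl (fun i _ => Finset.sum_congr rfl (fun k _ =>
    Finset.sum_congr rfl (fun j _ => integral_finset_sum _ (fun l _ =>
      (integrable_mono4 i j k l).const_mul _))))]
  rw [Finset.sum_congr rfl (fun i _ => Finset.sum_congr rfl (fun k _ =>
    Finset.sum_congr rfl (fun j _ => Finset.sum_congr rfl (fun l _ =>
      integral_const_mul _ _))))]
  simp only [T_eq]
  have rhs1 : (∑ p, v p * v p) * (∑ p, u p * u p) = ∑ i, ∑ k, (v i * v i) * (u k * u k) := by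
    rw [Finset.sum_mul_sum]
  have rhs2 : (∑ p, v p * u p) ^ 2 = ∑ i, ∑ j, (v i * u i) * (v j * u j) := by
    rw [pow_two, Finset.sum_mul_sum]
  rw [rhs1, rhs2]
  simp only [mul_add, mul_ite, ite_mul, mul_one, mul_zero, one_mul, zero_mul,
    Finset.sum_add_distrib, Finset.sum_ite_irrel, Finset.sum_const_zero,
    Finset.sum_ite_eq, Finset.sum_ite_eq', Finset.mem_univ, if_true,
    Finset.mul_sum, Finset.sum_mul]
  have h2 : ∑ x : Fin n, ∑ y : Fin n, v x * v y * (u x * u y)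
      = ∑ x : Fin n, ∑ y : Fin n, v x * u x * (v y * u y) :=
    Finset.sum_congr rfl fun x _ => Finset.sum_congr rfl fun y _ => by ring
  have h3 : ∑ x : Fin n, ∑ y : Fin n, v x * v y * (u y * u x)
      = ∑ x : Fin n, ∑ y : Fin n, v x * u x * (v y * u y) :=
    Finset.sum_congr rfl fun x _ => Finset.sum_congr rfl fun y _ => by ring
  rw [h2, h3]
  simp only [two_mul, Finset.sum_add_distrib]
  ring
end Keys





section PF
variable {n : ℕ}

lemma pf_pointwise (c : ℝ) (v w u : Fin n → ℝ) (x : Fin n → ℝ) :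
    (3 * (∑ p, x p * v p) ^ 2 - (∑ p, x p * w p) ^ 2 - c) * (∑ p, x p * u p) ^ 2 =
      3 * (((∑ p, x p * v p) * (∑ p, x p * v p)) * ((∑ p, x p * u p) * (∑ p, x p * u p)))
      - ((∑ p, x p * w p) * (∑ p, x p * w p)) * ((∑ p, x p * u p) * (∑ p, x p * u p))
      - c * ((∑ p, x p * u p) * (∑ p, x p * u p)) := by ring

lemma integrable_pf (c : ℝ) (v w u : Fin n → ℝ) :
    Integrable (fun x : Fin n → ℝ =>
      (3 * (∑ p, x p * v p) ^ 2 - (∑ p, x p * w p) ^ 2 - c) * (∑ p, x p * u p) ^ 2) (gammaN n) := by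
  simp only [pf_pointwise]
  exact (((integrable_X4 v v u u).const_mul 3).sub (integrable_X4 w w u u)).sub
    ((integrable_X2 u u).const_mul c)

lemma integral_pf (c : ℝ) (v w u : Fin n → ℝ) :
    ∫ x : Fin n → ℝ,
      (3 * (∑ p, x p * v p) ^ 2 - (∑ p, x p * w p) ^ 2 - c) * (∑ p, x p * u p) ^ 2 ∂(gammaN n) =
      3 * ((∑ p, v p * v p) * (∑ p, u p * u p) + 2 * (∑ p, v p * u p) ^ 2)
      - ((∑ p, w p * w p) * (∑ p, u p * u p) + 2 * (∑ p, w p * u p) ^ 2)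
      - c * (∑ p, u p * u p) := by
  simp only [pf_pointwise]
  have h1 : Integrable (fun x : Fin n → ℝ =>
      3 * (((∑ p, x p * v p) * (∑ p, x p * v p)) * ((∑ p, x p * u p) * (∑ p, x p * u p)))
      - ((∑ p, x p * w p) * (∑ p, x p * w p)) * ((∑ p, x p * u p) * (∑ p, x p * u p))) (gammaN n) :=
    ((integrable_X4 v v u u).const_mul 3).sub (integrable_X4 w w u u)
  rw [integral_sub h1 ((integrable_X2 u u).const_mul c),
    integral_sub ((integrable_X4 v v u u).const_mul 3) (integrable_X4 w w u u),
    integral_const_mul, integral_const_mul, integral_X4, integral_X4, integral_X2]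

lemma inner_eq_sum (a v : EuclideanSpace ℝ (Fin n)) : ⟪a, v⟫ = ∑ p, a p * v p := by
  simp [PiLp.inner_apply, RCLike.inner_apply, conj_trivial]
  exact Finset.sum_congr rfl fun _ _ => mul_comm _ _

lemma norm_sq_eq_sum (v : EuclideanSpace ℝ (Fin n)) : ‖v‖ ^ 2 = ∑ p, v p * v p := by
  rw [← real_inner_self_eq_norm_sq, inner_eq_sum]

instance : IsProbabilityMeasure (stdGaussianE n) :=
  Measure.isProbabilityMeasure_map (MeasurableEquiv.toLp 2 (Fin n → ℝ)).measurable.aemeasurable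

lemma integrable_pfE (c : ℝ) (v w u : EuclideanSpace ℝ (Fin n)) :
    Integrable (fun a : EuclideanSpace ℝ (Fin n) =>
      (3 * ⟪a, v⟫ ^ 2 - ⟪a, w⟫ ^ 2 - c) * ⟪a, u⟫ ^ 2) (stdGaussianE n) := by
  simp only [inner_eq_sum]
  have he : MeasurableEmbedding (WithLp.toLp 2 : (Fin n → ℝ) → EuclideanSpace ℝ (Fin n)) :=
    (MeasurableEquiv.toLp 2 (Fin n → ℝ)).measurableEmbedding
  rw [stdGaussianE, he.integrable_map_iff]
  exact integrable_pf c v w u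

lemma integral_pfE (c : ℝ) (v w u : EuclideanSpace ℝ (Fin n)) :
    ∫ a, (3 * ⟪a, v⟫ ^ 2 - ⟪a, w⟫ ^ 2 - c) * ⟪a, u⟫ ^ 2 ∂(stdGaussianE n) =
      3 * (‖v‖ ^ 2 * ‖u‖ ^ 2 + 2 * ⟪v, u⟫ ^ 2)
      - (‖w‖ ^ 2 * ‖u‖ ^ 2 + 2 * ⟪w, u⟫ ^ 2) - c * ‖u‖ ^ 2 := by
  simp only [inner_eq_sum, norm_sq_eq_sum]
  have he : MeasurableEmbedding (WithLp.toLp 2 : (Fin n → ℝ) → EuclideanSpace ℝ (Fin n)) :=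
    (MeasurableEquiv.toLp 2 (Fin n → ℝ)).measurableEmbedding
  rw [stdGaussianE, he.integral_map]
  exact integral_pf c v w u

end PF


end Aux

/-- expectation of the Hessian quadratic form of the noisy
phase-retrieval objective under Gaussian measurements. -/
theorem stmt5 (n m : ℕ) (hm : 1 ≤ m) (xbar : EuclideanSpace ℝ (Fin n)) (ε : Fin m → ℝ)
    (x u : EuclideanSpace ℝ (Fin n)) :
    (∫ a : Fin m → EuclideanSpace ℝ (Fin n),
        (1 / (m : ℝ)) * ∑ r, (3 * ⟪a r, x⟫ ^ 2 - ⟪a r, xbar⟫ ^ 2 - ε r) * ⟪a r, u⟫ ^ 2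
          ∂(gaussProduct n m)) =
      6 * ⟪x, u⟫ ^ 2 + 3 * ‖x‖ ^ 2 * ‖u‖ ^ 2 - 2 * ⟪xbar, u⟫ ^ 2 - ‖xbar‖ ^ 2 * ‖u‖ ^ 2
        - ((1 / (m : ℝ)) * ∑ r, ε r) * ‖u‖ ^ 2 := by
  have key : ∀ r : Fin m,
      (∫ a : Fin m → EuclideanSpace ℝ (Fin n),
        (3 * ⟪a r, x⟫ ^ 2 - ⟪a r, xbar⟫ ^ 2 - ε r) * ⟪a r, u⟫ ^ 2
          ∂(Measure.pi fun _ : Fin m => stdGaussianE n)) =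
      3 * (‖x‖ ^ 2 * ‖u‖ ^ 2 + 2 * ⟪x, u⟫ ^ 2)
      - (‖xbar‖ ^ 2 * ‖u‖ ^ 2 + 2 * ⟪xbar, u⟫ ^ 2) - ε r * ‖u‖ ^ 2 := by
    intro r
    rw [my_integral_eval (stdGaussianE n)
        (fun y => (3 * ⟪y, x⟫ ^ 2 - ⟪y, xbar⟫ ^ 2 - ε r) * ⟪y, u⟫ ^ 2) r,
      integral_pfE]
  rw [show gaussProduct n m = Measure.pi fun _ : Fin m => stdGaussianE n from rfl,
    integral_const_mul,
    integral_finset_sum _ (fun r _ => my_integrable_eval (stdGaussianE n)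
      (integrable_pfE (ε r) x xbar u) r),
    Finset.sum_congr rfl (fun r _ => key r)]
  have hmne : (m : ℝ) ≠ 0 := Nat.cast_ne_zero.2 (by omega)
  rw [Finset.sum_sub_distrib]
  rw [Finset.sum_const, ← Finset.sum_mul]
  simp only [Finset.card_univ, Fintype.card_fin, nsmul_eq_mul]
  field_simp
  ring
end

section
/- Fix λ ∈ (1/(9√2), 1) and assume 0 ≤ ε̃ < λ·min(‖x̄‖²,1). Fix ϱ ∈ (0, (λ·min(‖x̄‖²,1) − ε̃)/(2·max(‖x̄‖²/3 + ‖ε‖_∞, 1))), set ρ = (1−λ)‖x̄‖/√3 and σ = λ·min(‖x̄‖²,1) − ε̃ − ϱ·max(‖x̄‖²/3 + ‖ε‖_∞, 1). Suppose there exists c_s ≥ 0 such that ‖ε‖_∞ ≤ c_s·min(‖x̄‖²,1) and (1−λ)·‖x̄‖·√(λ·min(‖x̄‖²,1) − ε̃) > 2√6·c_s·min(‖x̄‖²,1). Then ρ² − 4‖ε‖²/(mσ) > 0. -/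
open scoped BigOperators

set_option maxHeartbeats 1000000 in
/-- under the signal-to-noise assumption, the radius of strong
convexity dominates the noise: `ρ² − 4‖ε‖²/(mσ) > 0`. -/
theorem stmt13 (n m : ℕ) (hm : 1 ≤ m) (xbar : EuclideanSpace ℝ (Fin n)) (ε : Fin m → ℝ)
    (lam : ℝ) (hlam1 : 1 / (9 * Real.sqrt 2) < lam) (hlam2 : lam < 1)
    (hεt0 : 0 ≤ (1 / (m : ℝ)) * ∑ r, ε r)
    (hεt1 : (1 / (m : ℝ)) * ∑ r, ε r < lam * min (‖xbar‖ ^ 2) 1)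
    (ϱ : ℝ) (hϱ0 : 0 < ϱ)
    (hϱ1 : ϱ < (lam * min (‖xbar‖ ^ 2) 1 - (1 / (m : ℝ)) * ∑ r, ε r) /
      (2 * max (‖xbar‖ ^ 2 / 3 + ⨆ s, |ε s|) 1))
    (ρ σ : ℝ) (hρ : ρ = (1 - lam) * ‖xbar‖ / Real.sqrt 3)
    (hσ : σ = lam * min (‖xbar‖ ^ 2) 1 - (1 / (m : ℝ)) * ∑ r, ε r
      - ϱ * max (‖xbar‖ ^ 2 / 3 + ⨆ s, |ε s|) 1)
    (cs : ℝ) (hcs0 : 0 ≤ cs)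
    (hcs1 : (⨆ s, |ε s|) ≤ cs * min (‖xbar‖ ^ 2) 1)
    (hcs2 : (1 - lam) * ‖xbar‖ *
        Real.sqrt (lam * min (‖xbar‖ ^ 2) 1 - (1 / (m : ℝ)) * ∑ r, ε r) >
      2 * Real.sqrt 6 * cs * min (‖xbar‖ ^ 2) 1) :
    ρ ^ 2 - 4 * (∑ r, ε r ^ 2) / (m * σ) > 0 := by
  haveI : Nonempty (Fin m) := ⟨⟨0, hm⟩⟩
  set M : ℝ := min (‖xbar‖ ^ 2) 1 with hMdef
  set εt : ℝ := (1 / (m : ℝ)) * ∑ r, ε r with hεtdef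
  set E : ℝ := ⨆ s, |ε s| with hEdef
  set K : ℝ := max (‖xbar‖ ^ 2 / 3 + E) 1 with hKdef
  have hM0 : 0 ≤ M := le_min (sq_nonneg _) zero_le_one
  have hK1 : (1 : ℝ) ≤ K := le_max_right _ _
  have hK0 : (0 : ℝ) < K := lt_of_lt_of_le one_pos hK1
  have hD : 0 < lam * M - εt := sub_pos.mpr hεt1
  -- σ > (λM - εt)/2 > 0
  have hϱK : ϱ * K < (lam * M - εt) / 2 := by
    have h2K : (0:ℝ) < 2 * K := by linarith
    have h := (lt_div_iff₀ h2K).mp hϱ1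
    nlinarith [h]
  have hσhalf : (lam * M - εt) / 2 < σ := by rw [hσ]; linarith
  have hσ0 : 0 < σ := lt_trans (by linarith) hσhalf
  -- ‖xbar‖ > 0 and a := (1-λ)‖xbar‖ > 0
  have hrhs0 : 0 ≤ 2 * Real.sqrt 6 * cs * M := by positivity
  have ha0 : 0 < (1 - lam) * ‖xbar‖ * Real.sqrt (lam * M - εt) :=
    lt_of_le_of_lt hrhs0 hcs2
  have hx0 : 0 < ‖xbar‖ := by
    by_contra h
    push_neg at h
    have : ‖xbar‖ = 0 := le_antisymm h (norm_nonneg _)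
    rw [this] at ha0; simp at ha0
  have ha : 0 < (1 - lam) * ‖xbar‖ := mul_pos (by linarith) hx0
  -- square hcs2
  have hsq : ((1 - lam) * ‖xbar‖) ^ 2 * (lam * M - εt) > 24 * cs ^ 2 * M ^ 2 := by
    have h1 : ((1 - lam) * ‖xbar‖ * Real.sqrt (lam * M - εt)) ^ 2 >
        (2 * Real.sqrt 6 * cs * M) ^ 2 := by
      apply pow_lt_pow_left₀ hcs2 hrhs0
      norm_num
    have h2 : Real.sqrt (lam * M - εt) ^ 2 = lam * M - εt := Real.sq_sqrt hD.le
    have h3 : Real.sqrt 6 ^ 2 = 6 := Real.sq_sqrt (by norm_num)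
    have e1 : ((1 - lam) * ‖xbar‖ * Real.sqrt (lam * M - εt)) ^ 2
        = ((1 - lam) * ‖xbar‖) ^ 2 * (lam * M - εt) := by rw [mul_pow, h2]
    have e2 : (2 * Real.sqrt 6 * cs * M) ^ 2 = 24 * cs ^ 2 * M ^ 2 := by
      rw [show (2 * Real.sqrt 6 * cs * M) ^ 2
        = 4 * Real.sqrt 6 ^ 2 * (cs ^ 2 * M ^ 2) by ring, h3]; ring
    rw [e1, e2] at h1
    exact h1
  -- bound the noise sum
  have hEbd : ∀ s, |ε s| ≤ E := fun s => le_ciSup (f := fun s => |ε s|) (Set.Finite.bddAbove (Set.finite_range _)) s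
  have hE0 : 0 ≤ E := le_trans (abs_nonneg _) (hEbd ⟨0, hm⟩)
  have hsum : ∑ r, ε r ^ 2 ≤ (m : ℝ) * E ^ 2 := by
    calc ∑ r, ε r ^ 2 ≤ ∑ _r : Fin m, E ^ 2 := by
          apply Finset.sum_le_sum
          intro i _
          have := hEbd i
          nlinarith [abs_nonneg (ε i), sq_abs (ε i)]
      _ = (m : ℝ) * E ^ 2 := by simp [mul_comm]
  have hE2 : E ^ 2 ≤ cs ^ 2 * M ^ 2 := by
    have h := pow_le_pow_left₀ hE0 hcs1 2
    rwa [mul_pow] at h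
  have hm0 : (0:ℝ) < m := by exact_mod_cast hm
  -- main computation
  have hρ2 : ρ ^ 2 = ((1 - lam) * ‖xbar‖) ^ 2 / 3 := by
    rw [hρ, div_pow, Real.sq_sqrt (by norm_num : (3:ℝ) ≥ 0)]
  have hkey : ((1 - lam) * ‖xbar‖) ^ 2 * σ > 12 * cs ^ 2 * M ^ 2 := by
    have ha2 : 0 < ((1 - lam) * ‖xbar‖) ^ 2 := by positivity
    have h := mul_lt_mul_of_pos_left hσhalf ha2
    linarith [hsq, h]
  have hfrac : 4 * (∑ r, ε r ^ 2) / (m * σ) ≤ 4 * cs ^ 2 * M ^ 2 / σ := by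
    rw [div_le_div_iff₀ (by positivity) hσ0]
    have : 4 * (∑ r, ε r ^ 2) ≤ 4 * ((m:ℝ) * (cs ^ 2 * M ^ 2)) := by
      nlinarith [hsum, hE2, hm0]
    nlinarith [this, hσ0]
  have hfinal : 4 * cs ^ 2 * M ^ 2 / σ < ρ ^ 2 := by
    rw [hρ2, div_lt_div_iff₀ hσ0 (by norm_num : (0:ℝ) < 3)]
    nlinarith [hkey]
  linarith [hfrac, hfinal]
end

section
/- Let x̄, x⋆ ∈ ℝⁿ with ‖x̄‖ = 1 and let ε₀ be a real number with 0 < ε₀ < 1/3. If the rank-one matrices satisfy ‖x⋆ x⋆ᵀ − x̄ x̄ᵀ‖_F ≤ ε₀ in Frobenius norm, then min(‖x⋆ − x̄‖, ‖x⋆ + x̄‖) ≤ 2ε₀. -/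
open scoped BigOperators

lemma normsq_eq_sum {n : ℕ} (v : EuclideanSpace ℝ (Fin n)) :
    ‖v‖ ^ 2 = ∑ i, v i ^ 2 := by
  rw [EuclideanSpace.norm_eq, Real.sq_sqrt (Finset.sum_nonneg fun i _ => sq_nonneg _)]
  simp [Real.norm_eq_abs, sq_abs]

/-- if the rank-one matrices `x⋆x⋆ᵀ` and `x̄x̄ᵀ` are `ε₀`-close in
Frobenius norm and `‖x̄‖ = 1`, then `x⋆` is `2ε₀`-close to `x̄` or to `−x̄`. -/
theorem stmt15 (n : ℕ) (xbar xstar : EuclideanSpace ℝ (Fin n)) (hxbar : ‖xbar‖ = 1)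
    (ε₀ : ℝ) (hε₀0 : 0 < ε₀) (hε₀1 : ε₀ < 1 / 3)
    (hF : Real.sqrt (∑ i, ∑ j, (xstar i * xstar j - xbar i * xbar j) ^ 2) ≤ ε₀) :
    min ‖xstar - xbar‖ ‖xstar + xbar‖ ≤ 2 * ε₀ := by
  classical
  set A := ∑ i, xstar i ^ 2 with hAdef
  set B := ∑ i, xstar i * xbar i with hBdef
  have hA0 : 0 ≤ A := Finset.sum_nonneg fun i _ => sq_nonneg _
  have hC : (∑ i, xbar i ^ 2) = 1 := by
    have h := normsq_eq_sum xbar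
    rw [hxbar] at h
    linarith [h]
  have hS : (∑ i, ∑ j, (xstar i * xstar j - xbar i * xbar j) ^ 2)
      = A ^ 2 - 2 * B ^ 2 + 1 := by
    have expand : ∀ i j : Fin n, (xstar i * xstar j - xbar i * xbar j) ^ 2
        = xstar i ^ 2 * xstar j ^ 2 - 2 * ((xstar i * xbar i) * (xstar j * xbar j))
          + xbar i ^ 2 * xbar j ^ 2 := fun i j => by ring
    simp_rw [expand, Finset.sum_add_distrib, Finset.sum_sub_distrib, ← Finset.mul_sum,
      ← Finset.sum_mul, ← hAdef, ← hBdef, hC]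
    ring
  have hnn : (0:ℝ) ≤ ∑ i, ∑ j, (xstar i * xstar j - xbar i * xbar j) ^ 2 :=
    Finset.sum_nonneg fun i _ => Finset.sum_nonneg fun j _ => sq_nonneg _
  have hSle : A ^ 2 - 2 * B ^ 2 + 1 ≤ ε₀ ^ 2 := by
    nlinarith [Real.sq_sqrt hnn, Real.sqrt_nonneg
      (∑ i, ∑ j, (xstar i * xstar j - xbar i * xbar j) ^ 2), hF, hS]
  have hsub : ‖xstar - xbar‖ ^ 2 = A - 2 * B + 1 := by
    rw [normsq_eq_sum (xstar - xbar)]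
    have : ∀ i : Fin n, ((xstar - xbar) i) ^ 2
        = xstar i ^ 2 - 2 * (xstar i * xbar i) + xbar i ^ 2 := by
      intro i
      have : (xstar - xbar) i = xstar i - xbar i := rfl
      rw [this]; ring
    simp_rw [this, Finset.sum_add_distrib, Finset.sum_sub_distrib, ← Finset.mul_sum,
      ← hAdef, ← hBdef, hC]
  have hadd : ‖xstar + xbar‖ ^ 2 = A + 2 * B + 1 := by
    rw [normsq_eq_sum (xstar + xbar)]
    have : ∀ i : Fin n, ((xstar + xbar) i) ^ 2
        = xstar i ^ 2 + 2 * (xstar i * xbar i) + xbar i ^ 2 := by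
      intro i
      have : (xstar + xbar) i = xstar i + xbar i := rfl
      rw [this]; ring
    simp_rw [this, Finset.sum_add_distrib, ← Finset.mul_sum, ← hAdef, ← hBdef, hC]
  rcases le_or_gt 0 B with hb | hb
  · have hd : 0 ≤ A - 2 * B + 1 := by rw [← hsub]; positivity
    have key : ‖xstar - xbar‖ ^ 2 ≤ 4 * ε₀ ^ 2 := by
      rw [hsub]
      nlinarith [mul_nonneg hd (add_nonneg hA0 (by linarith : (0:ℝ) ≤ 2 * B)),
        sq_nonneg (A - 1), sq_nonneg ε₀, hSle]
    have : ‖xstar - xbar‖ ≤ 2 * ε₀ := by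
      nlinarith [norm_nonneg (xstar - xbar), key, hε₀0]
    exact (min_le_left _ _).trans this
  · have hd : 0 ≤ A + 2 * B + 1 := by rw [← hadd]; positivity
    have key : ‖xstar + xbar‖ ^ 2 ≤ 4 * ε₀ ^ 2 := by
      rw [hadd]
      nlinarith [mul_nonneg hd (add_nonneg hA0 (by linarith : (0:ℝ) ≤ -(2 * B))),
        sq_nonneg (A - 1), sq_nonneg ε₀, hSle]
    have : ‖xstar + xbar‖ ≤ 2 * ε₀ := by
      nlinarith [norm_nonneg (xstar + xbar), key, hε₀0]
    exact (min_le_right _ _).trans this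
end

section
/- Let x̄ ∈ ℝⁿ with x̄ ≠ 0, let ε̃ ≥ 0, and let δ be a real number with 0 ≤ δ ≤ ‖x̄‖². Let Y be a real symmetric n×n matrix with ‖Y − 2x̄x̄ᵀ − (‖x̄‖² + ε̃)·I‖ ≤ δ in operator norm. If x̃ ∈ ℝⁿ is an eigenvector of Y associated with its largest eigenvalue, normalized so that ‖x̃‖ = ‖x̄‖, then min(‖x̃ − x̄‖, ‖x̃ + x̄‖) ≤ √(2 − 2√(1 − δ/‖x̄‖²)) · ‖x̄‖. -/
open scoped RealInnerProductSpace

/-- an eigenvector for the top eigenvalue of a matrix close (in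
operator norm) to `2x̄x̄ᵀ + (‖x̄‖² + ε̃)I`, normalized to `‖x̃‖ = ‖x̄‖`, is close
to `x̄` or to `−x̄`. -/
theorem stmt16 (n : ℕ) (xbar : EuclideanSpace ℝ (Fin n)) (hxbar : xbar ≠ 0)
    (εt : ℝ) (hεt : 0 ≤ εt) (δ : ℝ) (hδ0 : 0 ≤ δ) (hδ1 : δ ≤ ‖xbar‖ ^ 2)
    (Y : EuclideanSpace ℝ (Fin n) →L[ℝ] EuclideanSpace ℝ (Fin n))
    (hsym : ∀ u v : EuclideanSpace ℝ (Fin n), ⟪Y u, v⟫ = ⟪u, Y v⟫)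
    (hclose : ‖Y - ((2 : ℝ) • ((innerSL ℝ xbar).smulRight xbar)
        + (‖xbar‖ ^ 2 + εt) • ContinuousLinearMap.id ℝ (EuclideanSpace ℝ (Fin n)))‖ ≤ δ)
    (lmax : ℝ) (xt : EuclideanSpace ℝ (Fin n))
    (heig : Y xt = lmax • xt) (hnorm : ‖xt‖ = ‖xbar‖)
    (hmax : ∀ (μ : ℝ) (v : EuclideanSpace ℝ (Fin n)), v ≠ 0 → Y v = μ • v → μ ≤ lmax) :
    min ‖xt - xbar‖ ‖xt + xbar‖ ≤
      Real.sqrt (2 - 2 * Real.sqrt (1 - δ / ‖xbar‖ ^ 2)) * ‖xbar‖ := by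
  have hNT : Nontrivial (EuclideanSpace ℝ (Fin n)) := nontrivial_of_ne xbar 0 hxbar
  have hr : (0:ℝ) < ‖xbar‖ := norm_pos_iff.2 hxbar
  have hr2 : (0:ℝ) < ‖xbar‖ ^ 2 := pow_pos hr 2
  set r : ℝ := ‖xbar‖ with hrdef
  -- Rayleigh bound: ⟪Y w, w⟫ ≤ lmax ‖w‖² for w ≠ 0
  have hray : ∀ w : EuclideanSpace ℝ (Fin n), w ≠ 0 → ⟪Y w, w⟫ ≤ lmax * ‖w‖ ^ 2 := by
    intro w hw
    have hsymL : (Y : EuclideanSpace ℝ (Fin n) →ₗ[ℝ] EuclideanSpace ℝ (Fin n)).IsSymmetric :=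
      fun u v => hsym u v
    set μ : ℝ := ⨆ x : { x : EuclideanSpace ℝ (Fin n) // x ≠ 0 },
        RCLike.re ⟪(Y : EuclideanSpace ℝ (Fin n) →ₗ[ℝ] EuclideanSpace ℝ (Fin n)) x, x⟫ / ‖(x : EuclideanSpace ℝ (Fin n))‖ ^ 2 with hμ
    have hev := hsymL.hasEigenvalue_iSup_of_finiteDimensional
    obtain ⟨v, hv⟩ := hev.exists_hasEigenvector
    have hμle : μ ≤ lmax := hmax μ v hv.2 hv.apply_eq_smul
    have hbdd : BddAbove (Set.range fun x : { x : EuclideanSpace ℝ (Fin n) // x ≠ 0 } =>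
        RCLike.re ⟪(Y : EuclideanSpace ℝ (Fin n) →ₗ[ℝ] EuclideanSpace ℝ (Fin n)) x, x⟫ / ‖(x : EuclideanSpace ℝ (Fin n))‖ ^ 2) := by
      refine ⟨‖Y‖, ?_⟩
      rintro _ ⟨x, rfl⟩
      have hx : (0:ℝ) < ‖(x : EuclideanSpace ℝ (Fin n))‖ := norm_pos_iff.2 x.2
      rw [div_le_iff₀ (by positivity)]
      calc RCLike.re ⟪(Y : EuclideanSpace ℝ (Fin n) →ₗ[ℝ] EuclideanSpace ℝ (Fin n)) x, x⟫
          = ⟪Y (x : EuclideanSpace ℝ (Fin n)), x⟫ := rfl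
        _ ≤ ‖Y (x : EuclideanSpace ℝ (Fin n))‖ * ‖(x : EuclideanSpace ℝ (Fin n))‖ :=
            real_inner_le_norm _ _
        _ ≤ (‖Y‖ * ‖(x : EuclideanSpace ℝ (Fin n))‖) * ‖(x : EuclideanSpace ℝ (Fin n))‖ := by
            gcongr; exact Y.le_opNorm _
        _ = ‖Y‖ * ‖(x : EuclideanSpace ℝ (Fin n))‖ ^ 2 := by ring
    have hray' : ⟪Y w, w⟫ / ‖w‖ ^ 2 ≤ μ := le_ciSup hbdd ⟨w, hw⟩
    have hw2 : (0:ℝ) < ‖w‖ ^ 2 := pow_pos (norm_pos_iff.2 hw) 2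
    rw [div_le_iff₀ hw2] at hray'
    nlinarith
  -- the model operator A and the error E0
  set A : EuclideanSpace ℝ (Fin n) →L[ℝ] EuclideanSpace ℝ (Fin n) :=
    (2 : ℝ) • ((innerSL ℝ xbar).smulRight xbar)
      + (‖xbar‖ ^ 2 + εt) • ContinuousLinearMap.id ℝ (EuclideanSpace ℝ (Fin n)) with hAdef
  have hAapp : ∀ v : EuclideanSpace ℝ (Fin n),
      ⟪A v, v⟫ = 2 * ⟪xbar, v⟫ ^ 2 + (r ^ 2 + εt) * ‖v‖ ^ 2 := by
    intro v
    have : A v = (2 : ℝ) • (⟪xbar, v⟫ • xbar) + (r ^ 2 + εt) • v := by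
      simp [hAdef, ContinuousLinearMap.smulRight_apply, hrdef]
    rw [this, inner_add_left, real_inner_smul_left, real_inner_smul_left,
      real_inner_smul_left, real_inner_self_eq_norm_sq]
    ring
  have hE : ∀ v : EuclideanSpace ℝ (Fin n), |⟪(Y - A) v, v⟫| ≤ δ * ‖v‖ ^ 2 := by
    intro v
    calc |⟪(Y - A) v, v⟫| ≤ ‖(Y - A) v‖ * ‖v‖ := abs_real_inner_le_norm _ _
      _ ≤ (‖Y - A‖ * ‖v‖) * ‖v‖ := by gcongr; exact (Y - A).le_opNorm _
      _ ≤ (δ * ‖v‖) * ‖v‖ := by gcongr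
      _ = δ * ‖v‖ ^ 2 := by ring
  have hYsplit : ∀ v : EuclideanSpace ℝ (Fin n), ⟪Y v, v⟫ = ⟪A v, v⟫ + ⟪(Y - A) v, v⟫ := by
    intro v
    simp [ContinuousLinearMap.sub_apply, inner_sub_left]
  -- lower bound on lmax from Rayleigh at xbar
  have hEb := hE xbar
  have h1 : 2 * r ^ 2 * r ^ 2 + (r ^ 2 + εt) * r ^ 2 - δ * r ^ 2 ≤ lmax * r ^ 2 := by
    have := hray xbar hxbar
    rw [hYsplit xbar, hAapp xbar, real_inner_self_eq_norm_sq] at this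
    have := abs_le.1 hEb
    nlinarith [this.1]
  -- upper bound from the eigenvector xt
  have hxt0 : xt ≠ 0 := by
    intro h
    rw [h, norm_zero] at hnorm
    exact hr.ne hnorm
  have h2 : lmax * r ^ 2 ≤ 2 * ⟪xbar, xt⟫ ^ 2 + (r ^ 2 + εt) * r ^ 2 + δ * r ^ 2 := by
    have hY : ⟪Y xt, xt⟫ = lmax * r ^ 2 := by
      rw [heig, real_inner_smul_left, real_inner_self_eq_norm_sq, hnorm]
    have hsp := hYsplit xt
    rw [hY, hAapp xt, hnorm] at hsp
    have := (abs_le.1 (hE xt)).2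
    rw [hnorm] at this
    nlinarith
  -- key: ⟪xbar, xt⟫² ≥ r⁴ − δ r²
  have hkey : r ^ 2 * r ^ 2 - δ * r ^ 2 ≤ ⟪xbar, xt⟫ ^ 2 := by nlinarith
  set t : ℝ := ⟪xbar, xt⟫ with htdef
  have habs : r ^ 2 * Real.sqrt (1 - δ / r ^ 2) ≤ |t| := by
    have h1δ : (0:ℝ) ≤ 1 - δ / r ^ 2 := by
      rw [sub_nonneg, div_le_one hr2]; exact hδ1
    have : r ^ 2 * Real.sqrt (1 - δ / r ^ 2) = Real.sqrt (r ^ 2 * r ^ 2 - δ * r ^ 2) := by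
      rw [← Real.sqrt_sq hr2.le, ← Real.sqrt_mul (sq_nonneg _)]
      congr 1
      field_simp
      ring_nf
      have h4 : Real.sqrt (r ^ 4) ^ 2 = r ^ 4 := Real.sq_sqrt (by positivity)
      linear_combination (δ - Real.sqrt (r ^ 4)) * h4
    rw [this, ← Real.sqrt_sq (abs_nonneg t)]
    exact Real.sqrt_le_sqrt (by rw [sq_abs]; exact hkey)
  -- norms of xt ∓ xbar
  have hsub : ‖xt - xbar‖ ^ 2 = 2 * r ^ 2 - 2 * t := by
    rw [← real_inner_self_eq_norm_sq, inner_sub_sub_self, real_inner_self_eq_norm_sq,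
      real_inner_self_eq_norm_sq, hnorm, real_inner_comm]
    ring
  have hadd : ‖xt + xbar‖ ^ 2 = 2 * r ^ 2 + 2 * t := by
    rw [← real_inner_self_eq_norm_sq, inner_add_add_self, real_inner_self_eq_norm_sq,
      real_inner_self_eq_norm_sq, hnorm, real_inner_comm]
    ring
  -- conclude
  set s : ℝ := Real.sqrt (1 - δ / r ^ 2) with hsdef
  have hs0 : 0 ≤ s := Real.sqrt_nonneg _
  have hs1 : s ≤ 1 := by
    rw [hsdef]
    exact Real.sqrt_le_one.mpr (by have := div_nonneg hδ0 hr2.le; linarith)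
  have h0 : 0 ≤ min ‖xt - xbar‖ ‖xt + xbar‖ := le_min (norm_nonneg _) (norm_nonneg _)
  have hmin2 : (min ‖xt - xbar‖ ‖xt + xbar‖) ^ 2 ≤ 2 * r ^ 2 - 2 * |t| := by
    rcases le_total 0 t with ht | ht
    · have h' := pow_le_pow_left₀ h0 (min_le_left ‖xt - xbar‖ ‖xt + xbar‖) 2
      rw [hsub] at h'
      rw [abs_of_nonneg ht]
      linarith
    · have h' := pow_le_pow_left₀ h0 (min_le_right ‖xt - xbar‖ ‖xt + xbar‖) 2
      rw [hadd] at h'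
      rw [abs_of_nonpos ht]
      linarith
  have hgoal2 : (min ‖xt - xbar‖ ‖xt + xbar‖) ^ 2 ≤ (2 - 2 * s) * r ^ 2 := by
    linarith [habs]
  have hrhs : Real.sqrt (2 - 2 * s) * r = Real.sqrt ((2 - 2 * s) * r ^ 2) := by
    rw [Real.sqrt_mul (by linarith), Real.sqrt_sq hr.le]
  calc min ‖xt - xbar‖ ‖xt + xbar‖
      = Real.sqrt ((min ‖xt - xbar‖ ‖xt + xbar‖) ^ 2) := (Real.sqrt_sq h0).symm
    _ ≤ Real.sqrt ((2 - 2 * s) * r ^ 2) := Real.sqrt_le_sqrt hgoal2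
    _ = Real.sqrt (2 - 2 * s) * r := hrhs.symm
end
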